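/- For an order bounded linear functional l on a Riesz space X, the kernel of l is a Grothendieck subspace if and only if |l| is a 2-disjoint operator, i.e., |l| is the sum of at most two Riesz homomorphisms. -/
import Mathlib


variable {X : Type*} [Lattice X] [AddCommGroup X]
  [CovariantClass X X (· + ·) (· ≤ ·)] [Module ℝ X] [PosSMulMono ℝ X]

/-- A Grothendieck subspace: closed under `x ⊔ y ⊔ 0 + x ⊓ y ⊓ 0`. -/
def IsGrothendieckSubspace (H : Submodule ℝ X) : Prop :=
  ∀ x ∈ H, ∀ y ∈ H, x ⊔ y ⊔ 0 + x ⊓ y ⊓ 0 ∈ H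

/-- A Riesz subspace: closed under the lattice operations. -/
def IsRieszSubspace (H : Submodule ℝ X) : Prop :=
  ∀ x ∈ H, ∀ y ∈ H, x ⊔ y ∈ H ∧ x ⊓ y ∈ H

/-- A Riesz homomorphism: a linear map preserving finite suprema. -/
def IsRieszHom (f : X →ₗ[ℝ] ℝ) : Prop :=
  ∀ x y : X, f (x ⊔ y) = f x ⊔ f y

/-- A positive linear functional. -/
def IsPositive (f : X →ₗ[ℝ] ℝ) : Prop :=
  ∀ x : X, 0 ≤ x → 0 ≤ f x

/-- `p` is the positive part of the order bounded functional `l`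
(so `l₋ = p - l` and `|l| = p + (p - l)`). -/
def IsPosPartOf (l p : X →ₗ[ℝ] ℝ) : Prop :=
  IsPositive p ∧ IsPositive (p - l) ∧
    ∀ x : X, 0 ≤ x → p x = sSup {r : ℝ | ∃ y : X, 0 ≤ y ∧ y ≤ x ∧ l y = r}


set_option linter.unusedSectionVars false
set_option maxHeartbeats 1000000

attribute [local instance] AddCommGroup.toDistribLattice


/-- `(P - Q) ⊔ 0 = P - P ⊓ Q`. -/
lemma aux_pos_sub (P Q : X) : (P - Q) ⊔ 0 = P - P ⊓ Q := by
  have h1 : (P - Q) ⊔ (Q - Q) = (P ⊔ Q) - Q := (sup_sub P Q Q).symm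
  rw [sub_self] at h1
  rw [h1, sub_eq_sub_iff_add_eq_add, add_comm, inf_add_sup]

lemma aux_inf_zero (P Q : X) : (P - Q) ⊓ 0 = P ⊓ Q - Q := by
  have := aux_pos_sub Q P
  have h2 : (P - Q) ⊓ 0 = -((Q - P) ⊔ 0) := by
    rw [neg_sup, neg_sub, neg_zero]
  rw [h2, this, neg_sub, inf_comm]

lemma aux_sup_le_add (P Q : X) (hP : 0 ≤ P) (hQ : 0 ≤ Q) : P ⊔ Q ≤ P + Q :=
  sup_le (le_add_of_nonneg_right hQ) (le_add_of_nonneg_left hP)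

lemma aux_add_inf_le (P Q R : X) (hP : 0 ≤ P) (hQ : 0 ≤ Q) (hR : 0 ≤ R) :
    (P + Q) ⊓ R ≤ P ⊓ R + Q ⊓ R := by
  have h : P ⊓ R + Q ⊓ R = ((P + Q) ⊓ (P + R)) ⊓ ((R + Q) ⊓ (R + R)) := by
    rw [inf_add, add_inf, add_inf]
  rw [h]
  refine le_inf (le_inf inf_le_left ?_) (le_inf ?_ ?_)
  · exact inf_le_right.trans (le_add_of_nonneg_left hP)
  · exact inf_le_right.trans (le_add_of_nonneg_right hQ)
  · exact inf_le_right.trans (le_add_of_nonneg_right hR)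

lemma aux_sup_inf_le (P Q R : X) (hP : 0 ≤ P) (hQ : 0 ≤ Q) (hR : 0 ≤ R) :
    (P ⊔ Q) ⊓ R ≤ P ⊓ R + Q ⊓ R :=
  (inf_le_inf_right R (aux_sup_le_add P Q hP hQ)).trans (aux_add_inf_le P Q R hP hQ hR)

lemma aux_riesz_decomp (y x₁ x₂ : X) (hy : 0 ≤ y) (hyx : y ≤ x₁ + x₂)
    (hx₁ : 0 ≤ x₁) (hx₂ : 0 ≤ x₂) : ∃ y₁ y₂ : X, 0 ≤ y₁ ∧ y₁ ≤ x₁ ∧ 0 ≤ y₂ ∧ y₂ ≤ x₂ ∧ y = y₁ + y₂ := by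
  refine ⟨y ⊓ x₁, y - y ⊓ x₁, le_inf hy hx₁, inf_le_right,
    by simpa using inf_le_left (a := y) (b := x₁), ?_, by abel⟩
  have h1 : y - y ⊓ x₁ = (y - x₁) ⊔ 0 := (aux_pos_sub y x₁).symm
  have h2 : (y - x₁) ⊔ 0 ≤ (x₁ + x₂ - x₁) ⊔ 0 :=
    sup_le_sup_right (sub_le_sub_right hyx x₁) 0
  have h3 : x₁ + x₂ - x₁ = x₂ := by abel
  rw [h1]
  calc (y - x₁) ⊔ 0 ≤ x₂ ⊔ 0 := by rwa [h3] at h2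
    _ = x₂ := sup_eq_left.mpr hx₂

lemma aux_smul_le_smul (s t : ℝ) (x : X) (hst : s ≤ t) (hx : 0 ≤ x) :
    s • x ≤ t • x := by
  have h : 0 ≤ (t - s) • x := smul_nonneg (by linarith) hx
  have : t • x = s • x + (t - s) • x := by rw [← add_smul]; ring_nf
  rw [this]
  exact le_add_of_nonneg_right h

lemma aux_smul_sup (c : ℝ) (hc : 0 < c) (x y : X) : c • (x ⊔ y) = (c • x) ⊔ (c • y) := by
  refine le_antisymm ?_ (sup_le (smul_le_smul_of_nonneg_left le_sup_left hc.le)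
    (smul_le_smul_of_nonneg_left le_sup_right hc.le))
  have h : x ⊔ y ≤ c⁻¹ • ((c • x) ⊔ (c • y)) := by
    refine sup_le ?_ ?_
    · have := smul_le_smul_of_nonneg_left (le_sup_left : c • x ≤ (c • x) ⊔ (c • y))
        (inv_nonneg.mpr hc.le)
      rwa [smul_smul, inv_mul_cancel₀ hc.ne', one_smul] at this
    · have := smul_le_smul_of_nonneg_left (le_sup_right : c • y ≤ (c • x) ⊔ (c • y))
        (inv_nonneg.mpr hc.le)
      rwa [smul_smul, inv_mul_cancel₀ hc.ne', one_smul] at this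
  have := smul_le_smul_of_nonneg_left h hc.le
  rwa [smul_smul, mul_inv_cancel₀ hc.ne', one_smul] at this

lemma aux_smul_inf (c : ℝ) (hc : 0 < c) (x y : X) : c • (x ⊓ y) = (c • x) ⊓ (c • y) := by
  have h := aux_smul_sup c hc (-x) (-y)
  have hn : ∀ z : X, c • (-z) = -(c • z) := fun z => smul_neg c z
  rw [hn, hn, ← neg_inf, ← neg_inf] at h
  · exact neg_injective (by rw [← h, smul_neg])

/-- scaled disjointness -/
lemma aux_smul_disj (s t : ℝ) (u v : X) (hs : 0 < s) (ht : 0 < t)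
    (hu : 0 ≤ u) (hv : 0 ≤ v) (h : u ⊓ v = 0) : (s • u) ⊓ (t • v) = 0 := by
  set K := max s t with hK
  have hK0 : 0 < K := lt_max_of_lt_left hs
  have h1 : s • u ≤ K • u := aux_smul_le_smul s K u (le_max_left s t) hu
  have h2 : t • v ≤ K • v := aux_smul_le_smul t K v (le_max_right s t) hv
  have h3 : (s • u) ⊓ (t • v) ≤ (K • u) ⊓ (K • v) := inf_le_inf h1 h2
  rw [← aux_smul_inf K hK0, h, smul_zero] at h3
  exact le_antisymm h3 (le_inf (smul_nonneg hs.le hu) (smul_nonneg ht.le hv))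


lemma aux_mono {L : X →ₗ[ℝ] ℝ} (hL : IsPositive L) {x y : X} (h : x ≤ y) :
    L x ≤ L y := by
  have := hL (y - x) (by simpa using h)
  rw [map_sub] at this; linarith

lemma aux_hom_pos {f : X →ₗ[ℝ] ℝ} (hf : IsRieszHom f) : IsPositive f := by
  intro x hx
  have h := hf x 0
  rw [sup_eq_left.mpr hx, map_zero] at h
  rw [h]
  exact le_sup_right

lemma aux_hom_inf {f : X →ₗ[ℝ] ℝ} (hf : IsRieszHom f) (x y : X) :
    f (x ⊓ y) = f x ⊓ f y := by
  have h1 : x ⊓ y = x + y - x ⊔ y := by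
    rw [eq_sub_iff_add_eq, inf_add_sup]
  have h2 : f x ⊓ f y = f x + f y - f x ⊔ f y := by
    rw [eq_sub_iff_add_eq, inf_add_sup]
  rw [h1, map_sub, map_add, hf, h2]

lemma aux_hom_posPart {f : X →ₗ[ℝ] ℝ} (hf : IsRieszHom f) (x : X) :
    f (x ⊔ 0) = f x ⊔ 0 := by rw [hf, map_zero]

/-- characterization of Riesz homomorphisms -/
lemma aux_hom_char {L : X →ₗ[ℝ] ℝ} (hL : IsPositive L)
    (hd : ∀ u v : X, 0 ≤ u → 0 ≤ v → u ⊓ v = 0 → L u = 0 ∨ L v = 0) :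
    IsRieszHom L := by
  intro x y
  set s := x ⊔ y with hs
  have hdx : 0 ≤ s - x := sub_nonneg.mpr le_sup_left
  have hdy : 0 ≤ s - y := sub_nonneg.mpr le_sup_right
  have hinf : (s - x) ⊓ (s - y) = 0 := by
    rw [← sub_sup]  -- s - (x ⊔ y) = (s-x) ⊓ (s-y)
    simp [hs]
  rcases hd _ _ hdx hdy hinf with h | h <;> rw [map_sub] at h
  · have h2 : L y ≤ L x := by
      have := hL _ hdy; rw [map_sub] at this
      linarith
    rw [sup_eq_left.mpr h2]; linarith
  · have h2 : L x ≤ L y := by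
      have := hL _ hdx; rw [map_sub] at this
      linarith
    rw [sup_eq_right.mpr h2]; linarith


lemma aux_posPart_sub (x : X) : (x ⊔ 0) - ((-x) ⊔ 0) = x := by
  have h1 : (-x) ⊔ 0 = -(x ⊓ 0) := by rw [neg_inf, neg_zero]
  have h2 := inf_add_sup x 0
  rw [h1, sub_neg_eq_add]
  rw [add_zero] at h2
  rw [add_comm, h2]

lemma aux_eq_on_cone {L M : X →ₗ[ℝ] ℝ} (h : ∀ x : X, 0 ≤ x → L x = M x) (x : X) :
    L x = M x := by
  have hx : x = (x ⊔ 0) - ((-x) ⊔ 0) := (aux_posPart_sub x).symm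
  rw [hx, map_sub, map_sub, h _ le_sup_right, h _ le_sup_right]

section PosPart
variable {l p : X →ₗ[ℝ] ℝ} (hp : IsPosPartOf l p)
include hp

lemma aux_l_le_p {y x : X} (hy : 0 ≤ y) (hyx : y ≤ x) : l y ≤ p x := by
  have h1 := hp.2.1 y hy
  rw [LinearMap.sub_apply] at h1
  have h2 := aux_mono hp.1 hyx
  linarith

lemma aux_S_bdd (x : X) : BddAbove {r : ℝ | ∃ y : X, 0 ≤ y ∧ y ≤ x ∧ l y = r} := by
  refine ⟨p x, fun r hr => ?_⟩
  obtain ⟨y, hy, hyx, rfl⟩ := hr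
  exact aux_l_le_p hp hy hyx

lemma aux_S_zero_mem {x : X} (hx : 0 ≤ x) :
    (0:ℝ) ∈ {r : ℝ | ∃ y : X, 0 ≤ y ∧ y ≤ x ∧ l y = r} := ⟨0, le_refl 0, hx, map_zero l⟩

lemma aux_p_pos_witness {x : X} (hx : 0 ≤ x) (h : 0 < p x) :
    ∃ y : X, 0 ≤ y ∧ y ≤ x ∧ 0 < l y := by
  rw [hp.2.2 x hx] at h
  obtain ⟨r, hr, hr0⟩ := exists_lt_of_lt_csSup ⟨0, aux_S_zero_mem hp hx⟩ h
  obtain ⟨y, hy, hyx, rfl⟩ := hr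
  exact ⟨y, hy, hyx, hr0⟩

lemma aux_q_pos_witness {x : X} (hx : 0 ≤ x) (h : l x < p x) :
    ∃ z : X, 0 ≤ z ∧ z ≤ x ∧ l z < 0 := by
  rw [hp.2.2 x hx] at h
  obtain ⟨r, hr, hr0⟩ := exists_lt_of_lt_csSup ⟨0, aux_S_zero_mem hp hx⟩ h
  obtain ⟨y, hy, hyx, rfl⟩ := hr
  refine ⟨x - y, sub_nonneg.mpr hyx, by simpa using hy, ?_⟩
  rw [map_sub]; linarith

lemma aux_p_eq_l_of_pos (hl : IsPositive l) (x : X) : p x = l x := by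
  refine aux_eq_on_cone (fun z hz => ?_) x
  rw [hp.2.2 z hz]
  refine le_antisymm (csSup_le ⟨0, aux_S_zero_mem hp hz⟩ ?_)
    (le_csSup (aux_S_bdd hp z) ⟨z, hz, le_refl z, rfl⟩)
  rintro r ⟨y, hy, hyx, rfl⟩
  exact aux_mono hl hyx

lemma aux_p_eq_zero_of_nonpos (hl : ∀ u : X, 0 ≤ u → l u ≤ 0) (x : X) : p x = 0 := by
  have : ∀ z : X, 0 ≤ z → p z = (0 : X →ₗ[ℝ] ℝ) z := by
    intro z hz
    rw [hp.2.2 z hz, LinearMap.zero_apply]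
    refine le_antisymm (csSup_le ⟨0, aux_S_zero_mem hp hz⟩ ?_)
      (le_csSup (aux_S_bdd hp z) (aux_S_zero_mem hp hz))
    rintro r ⟨y, hy, hyx, rfl⟩
    exact hl y hy
  simpa using aux_eq_on_cone this x

end PosPart

lemma aux_G' {l : X →ₗ[ℝ] ℝ} (hG : IsGrothendieckSubspace (LinearMap.ker l))
    {x y : X} (hx : l x = 0) (hy : l y = 0) : l (x ⊔ y ⊔ 0) + l (x ⊓ y ⊓ 0) = 0 := by
  have := hG x (LinearMap.mem_ker.mpr hx) y (LinearMap.mem_ker.mpr hy)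
  rw [LinearMap.mem_ker, map_add] at this
  exact this

/-- Core lemma for the mixed case. -/
lemma aux_coreB {l : X →ₗ[ℝ] ℝ}
    (hG : ∀ x y : X, l x = 0 → l y = 0 → l (x ⊔ y ⊔ 0) + l (x ⊓ y ⊓ 0) = 0)
    {u v w : X} (hu : 0 ≤ u) (hv : 0 ≤ v) (hw : 0 ≤ w)
    (h1 : l u = 1) (h2 : l v = 1) (h3 : l w = -1) : l (u ⊓ v) = 1 := by
  have hx : l (u - v) = 0 := by rw [map_sub, h1, h2]; ring
  have hy : l (u + w) = 0 := by rw [map_add, h1, h3]; ring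
  have hkey := hG _ _ hx hy
  have hsup : (u - v) ⊔ (u + w) = u + w := by
    rw [sub_eq_add_neg, ← add_sup, sup_eq_right.mpr (neg_nonpos.mpr hv |>.trans hw)]
  have hinf : (u - v) ⊓ (u + w) = u - v := by
    rw [sub_eq_add_neg, ← add_inf, inf_eq_left.mpr (neg_nonpos.mpr hv |>.trans hw)]
  rw [hsup, hinf] at hkey
  rw [sup_eq_left.mpr (add_nonneg hu hw), aux_inf_zero u v, map_sub] at hkey
  rw [map_add, h1, h3] at hkey
  linarith

/-- Core lemma for the positive case. -/
lemma aux_coreA {L : X →ₗ[ℝ] ℝ} (hpos : IsPositive L)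
    (hG : ∀ x y : X, L x = 0 → L y = 0 → L (x ⊔ y ⊔ 0) + L (x ⊓ y ⊓ 0) = 0)
    {u v w : X} (hu : 0 ≤ u) (hv : 0 ≤ v) (hw : 0 ≤ w)
    (h1 : L u = 1) (h2 : L v = 1) (h3 : L w = 1) :
    (1:ℝ) ≤ L (u ⊓ w) + L (u ⊓ v) + L (w ⊓ v) := by
  have hx : L (u - v) = 0 := by rw [map_sub, h1, h2]; ring
  have hy : L (w - v) = 0 := by rw [map_sub, h3, h2]; ring
  have hkey := hG _ _ hx hy
  have hsup : (u - v) ⊔ (w - v) = (u ⊔ w) - v := (sup_sub u w v).symm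
  have hinf : (u - v) ⊓ (w - v) = (u ⊓ w) - v := (inf_sub u w v).symm
  rw [hsup, hinf, aux_pos_sub (u ⊔ w) v, aux_inf_zero (u ⊓ w) v] at hkey
  rw [map_sub, map_sub] at hkey
  have hsupval : L (u ⊔ w) = 2 - L (u ⊓ w) := by
    have h := inf_add_sup u w
    have := congrArg L h
    rw [map_add, map_add, h1, h3] at this
    linarith
  have hb1 : L ((u ⊔ w) ⊓ v) ≤ L (u ⊓ v) + L (w ⊓ v) := by
    have := aux_mono hpos (aux_sup_inf_le u w v hu hw hv)
    rwa [map_add] at this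
  have hb2 : 0 ≤ L ((u ⊓ w) ⊓ v) := hpos _ (le_inf (le_inf hu hw) hv)
  rw [hsupval, h2] at hkey
  linarith

lemma aux_inf_smul_le {s t K : ℝ} (hs : 0 < s) (ht : 0 < t) (hsK : s ≤ K) (htK : t ≤ K)
    {u w : X} (hu : 0 ≤ u) (hw : 0 ≤ w) : (s • u) ⊓ (t • w) ≤ K • (u ⊓ w) := by
  rw [aux_smul_inf K (hs.trans_le hsK)]
  exact inf_le_inf (aux_smul_le_smul s K u hsK hu) (aux_smul_le_smul t K w htK hw)

lemma aux_smul_one {L : X →ₗ[ℝ] ℝ} {u : X} (hLu : 0 < L u) : L ((L u)⁻¹ • u) = 1 := by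
  rw [map_smul, smul_eq_mul, inv_mul_cancel₀ hLu.ne']

/-- Three pairwise disjoint positive elements cannot all carry positive mass. -/
lemma aux_triple {L : X →ₗ[ℝ] ℝ} (hpos : IsPositive L)
    (hG : ∀ x y : X, L x = 0 → L y = 0 → L (x ⊔ y ⊔ 0) + L (x ⊓ y ⊓ 0) = 0)
    {u v w : X} (hu : 0 ≤ u) (hv : 0 ≤ v) (hw : 0 ≤ w)
    (hLu : 0 < L u) (hLv : 0 < L v) (hLw : 0 < L w)
    (huv : u ⊓ v = 0) (huw : u ⊓ w = 0) (hvw : v ⊓ w = 0) : False := by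
  have h1 := aux_coreA hpos hG (smul_nonneg (inv_nonneg.mpr hLu.le) hu)
    (smul_nonneg (inv_nonneg.mpr hLv.le) hv) (smul_nonneg (inv_nonneg.mpr hLw.le) hw)
    (aux_smul_one hLu) (aux_smul_one hLv) (aux_smul_one hLw)
  rw [aux_smul_disj _ _ _ _ (inv_pos.mpr hLu) (inv_pos.mpr hLw) hu hw huw,
    aux_smul_disj _ _ _ _ (inv_pos.mpr hLu) (inv_pos.mpr hLv) hu hv huv,
    aux_smul_disj _ _ _ _ (inv_pos.mpr hLw) (inv_pos.mpr hLv) hw hv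
      (by rw [inf_comm]; exact hvw)] at h1
  simp at h1
  linarith

/-- approximate version: u,v disjoint, w almost disjoint from both -/
lemma aux_triple_approx {L : X →ₗ[ℝ] ℝ} (hpos : IsPositive L)
    (hG : ∀ x y : X, L x = 0 → L y = 0 → L (x ⊔ y ⊔ 0) + L (x ⊓ y ⊓ 0) = 0)
    {u v w : X} (hu : 0 ≤ u) (hv : 0 ≤ v) (hw : 0 ≤ w)
    (hLu : 0 < L u) (hLv : 0 < L v) (hLw : 0 < L w)
    (huv : u ⊓ v = 0) {K : ℝ}
    (hKu : (L u)⁻¹ ≤ K) (hKv : (L v)⁻¹ ≤ K) (hKw : (L w)⁻¹ ≤ K) :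
    (1:ℝ) ≤ K * L (u ⊓ w) + K * L (v ⊓ w) := by
  have h1 := aux_coreA hpos hG (smul_nonneg (inv_nonneg.mpr hLu.le) hu)
    (smul_nonneg (inv_nonneg.mpr hLv.le) hv) (smul_nonneg (inv_nonneg.mpr hLw.le) hw)
    (aux_smul_one hLu) (aux_smul_one hLv) (aux_smul_one hLw)
  rw [aux_smul_disj _ _ _ _ (inv_pos.mpr hLu) (inv_pos.mpr hLv) hu hv huv] at h1
  have h2 : ((L u)⁻¹ • u) ⊓ ((L w)⁻¹ • w) ≤ K • (u ⊓ w) :=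
    aux_inf_smul_le (inv_pos.mpr hLu) (inv_pos.mpr hLw) hKu hKw hu hw
  have h3 : ((L w)⁻¹ • w) ⊓ ((L v)⁻¹ • v) ≤ K • (v ⊓ w) := by
    rw [inf_comm]
    exact aux_inf_smul_le (inv_pos.mpr hLv) (inv_pos.mpr hLw) hKv hKw hv hw
  have h4 := aux_mono hpos h2
  have h5 := aux_mono hpos h3
  rw [map_smul, smul_eq_mul] at h4 h5
  simp only [map_zero] at h1
  linarith

/-- the residual of x beyond n•(a+b) eventually has small mass -/
lemma aux_resid {L : X →ₗ[ℝ] ℝ} (hpos : IsPositive L)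
    (hG : ∀ x y : X, L x = 0 → L y = 0 → L (x ⊔ y ⊔ 0) + L (x ⊓ y ⊓ 0) = 0)
    {a b : X} (ha : 0 ≤ a) (hb : 0 ≤ b) (hab : a ⊓ b = 0)
    (hLa : 0 < L a) (hLb : 0 < L b) {x : X} (hx : 0 ≤ x) {ε : ℝ} (hε : 0 < ε) :
    ∃ n : ℕ, 1 ≤ n ∧ L (x - x ⊓ ((n:ℝ) • (a + b))) < ε := by
  set c : X := a + b with hcdef
  have hc : 0 ≤ c := add_nonneg ha hb
  set S : ℕ → X := fun k => x ⊓ (((k:ℝ)+1) • c) - x ⊓ ((k:ℝ) • c) with hSdef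
  have F1 : ∀ k : ℕ, S k = ((x - (k:ℝ) • c) ⊓ c) ⊔ 0 := by
    intro k
    set d : X := x - (k:ℝ) • c with hd
    have e1 : x ⊓ (((k:ℝ)+1) • c) = (d ⊓ c) + (k:ℝ) • c := by
      rw [inf_add]
      congr 1
      · rw [hd]; abel
      · rw [add_smul, one_smul]; abel
    have e2 : x ⊓ ((k:ℝ) • c) = (d ⊓ 0) + (k:ℝ) • c := by
      rw [inf_add, zero_add]
      congr 1
      rw [hd]; abel
    have e3 : (d ⊓ c) ⊔ 0 = d ⊓ c - d ⊓ 0 := by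
      have h4 := aux_pos_sub (d ⊓ c) 0
      rw [sub_zero] at h4
      rw [h4, inf_assoc, inf_eq_right.mpr hc]
    show x ⊓ (((k:ℝ)+1) • c) - x ⊓ ((k:ℝ) • c) = _
    rw [e1, e2, e3]
    abel
  have F2 : ∀ k : ℕ, 0 ≤ S k := fun k => (F1 k) ▸ le_sup_right
  have F3 : ∀ k : ℕ, S (k+1) ≤ S k := by
    intro k
    rw [F1 k, F1 (k+1)]
    refine sup_le_sup_right (inf_le_inf_right c (sub_le_sub_left ?_ x)) 0
    push_cast
    exact aux_smul_le_smul _ _ _ (by linarith) hc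
  have Fdef : ∀ k : ℕ, L (S k) = L (x ⊓ (((k:ℝ)+1) • c)) - L (x ⊓ ((k:ℝ) • c)) := by
    intro k
    show L (x ⊓ (((k:ℝ)+1) • c) - x ⊓ ((k:ℝ) • c)) = _
    rw [map_sub]
  have F4 : ∀ n : ℕ, ((n:ℝ)+1) * L (S n) ≤ L x := by
    have key : ∀ n : ℕ, ((n:ℝ)+1) * L (S n) ≤ L (x ⊓ (((n:ℝ)+1) • c)) := by
      intro n
      induction n with
      | zero =>
        have h0 : x ⊓ (((0:ℕ):ℝ)) • c = 0 := by
          rw [Nat.cast_zero, zero_smul, inf_eq_right.mpr hx]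
        have heq := Fdef 0
        rw [h0, map_zero] at heq
        rw [heq]
        norm_num
      | succ n ih =>
        have e := Fdef (n+1)
        have ecast : ((n+1:ℕ):ℝ) = (n:ℝ)+1 := by push_cast; ring
        rw [ecast] at e
        have hLS : L (S (n+1)) ≤ L (S n) := aux_mono hpos (F3 n)
        have hnn : 0 ≤ L (S (n+1)) := hpos _ (F2 _)
        have hmul : ((n:ℝ)+1) * L (S (n+1)) ≤ ((n:ℝ)+1) * L (S n) :=
          mul_le_mul_of_nonneg_left hLS (by positivity)
        push_cast
        rw [ecast] at *
        linarith [e, ih]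
    intro n
    calc ((n:ℝ)+1) * L (S n) ≤ L (x ⊓ (((n:ℝ)+1) • c)) := key n
      _ ≤ L x := aux_mono hpos inf_le_left
  by_contra hcon
  push_neg at hcon
  set K : ℝ := max (L a)⁻¹ (max (L b)⁻¹ ε⁻¹) with hK
  have hK0 : 0 < K := lt_of_lt_of_le (inv_pos.mpr hLa) (le_max_left _ _)
  obtain ⟨N, hN⟩ := exists_nat_gt (2 * K * L x)
  set n : ℕ := N + 1 with hn
  have hn1 : 1 ≤ n := by omega
  set r : X := x - x ⊓ ((n:ℝ) • c) with hr
  have hrsup : r = (x - (n:ℝ) • c) ⊔ 0 := (aux_pos_sub x _).symm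
  have hr0 : 0 ≤ r := by rw [hrsup]; exact le_sup_right
  have hrε : ε ≤ L r := hcon n hn1
  have hrL : 0 < L r := lt_of_lt_of_le hε hrε
  have hrc : r ⊓ c = S n := by
    rw [hrsup, inf_sup_right, inf_eq_left.mpr hc, ← F1 n]
  have hra : L (a ⊓ r) ≤ L (S n) := by
    refine aux_mono hpos ?_
    calc a ⊓ r ≤ c ⊓ r := inf_le_inf_right r (le_add_of_nonneg_right hb)
      _ = r ⊓ c := inf_comm _ _
      _ = S n := hrc
  have hrb : L (b ⊓ r) ≤ L (S n) := by
    refine aux_mono hpos ?_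
    calc b ⊓ r ≤ c ⊓ r := inf_le_inf_right r (le_add_of_nonneg_left ha)
      _ = r ⊓ c := inf_comm _ _
      _ = S n := hrc
  have happ := aux_triple_approx hpos hG ha hb hr0 hLa hLb hrL hab
    (le_max_left _ _) ((le_max_left _ _).trans (le_max_right _ _))
    (((inv_anti₀ hε hrε)).trans ((le_max_right _ _).trans (le_max_right _ _)))
  have hSx := F4 n
  have hSnn : 0 ≤ L (S n) := hpos _ (F2 n)
  have hNc : 2 * K * L x < (n:ℝ) + 1 := by
    push_cast [hn]
    linarith
  have h1 : (1:ℝ) ≤ 2 * K * L (S n) := by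
    have := mul_le_mul_of_nonneg_left hra hK0.le
    have := mul_le_mul_of_nonneg_left hrb hK0.le
    linarith [mul_le_mul_of_nonneg_left hra hK0.le, mul_le_mul_of_nonneg_left hrb hK0.le]
  nlinarith [mul_le_mul_of_nonneg_left hSx (le_of_lt hK0)]

/-- the set of values of `L` on `b`-disjoint components below `x` -/
def aux_set (L : X →ₗ[ℝ] ℝ) (b x : X) : Set ℝ :=
  {r : ℝ | ∃ y : X, 0 ≤ y ∧ y ≤ x ∧ y ⊓ b = 0 ∧ L y = r}

noncomputable def aux_f0 (L : X →ₗ[ℝ] ℝ) (b x : X) : ℝ := sSup (aux_set L b x)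

lemma aux_set_zero_mem {L : X →ₗ[ℝ] ℝ} {b : X} (hb : 0 ≤ b) {x : X} (hx : 0 ≤ x) :
    (0:ℝ) ∈ aux_set L b x :=
  ⟨0, le_refl 0, hx, inf_eq_left.mpr hb, map_zero L⟩

lemma aux_set_bdd {L : X →ₗ[ℝ] ℝ} (hpos : IsPositive L) (b x : X) :
    BddAbove (aux_set L b x) := by
  refine ⟨L x, fun r hr => ?_⟩
  obtain ⟨y, hy, hyx, -, rfl⟩ := hr
  exact aux_mono hpos hyx

lemma aux_f0_nonneg {L : X →ₗ[ℝ] ℝ} (hpos : IsPositive L) {b : X} (hb : 0 ≤ b)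
    {x : X} (hx : 0 ≤ x) : 0 ≤ aux_f0 L b x :=
  le_csSup (aux_set_bdd hpos b x) (aux_set_zero_mem hb hx)

lemma aux_f0_le {L : X →ₗ[ℝ] ℝ} (hpos : IsPositive L) {b : X} (hb : 0 ≤ b)
    {x : X} (hx : 0 ≤ x) : aux_f0 L b x ≤ L x :=
  csSup_le ⟨0, aux_set_zero_mem hb hx⟩
    (by rintro r ⟨y, hy, hyx, -, rfl⟩; exact aux_mono hpos hyx)

lemma aux_f0_zero {L : X →ₗ[ℝ] ℝ} (hpos : IsPositive L) {b : X} (hb : 0 ≤ b) :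
    aux_f0 L b 0 = 0 := by
  have h1 := aux_f0_le hpos hb (le_refl (0:X))
  have h2 := aux_f0_nonneg hpos hb (le_refl (0:X))
  rw [map_zero] at h1
  linarith

lemma aux_f0_witness {L : X →ₗ[ℝ] ℝ} (hpos : IsPositive L) {b : X} (hb : 0 ≤ b)
    {x : X} (hx : 0 ≤ x) (h : 0 < aux_f0 L b x) :
    ∃ y : X, 0 ≤ y ∧ y ≤ x ∧ y ⊓ b = 0 ∧ 0 < L y := by
  obtain ⟨r, hr, hr0⟩ := exists_lt_of_lt_csSup ⟨0, aux_set_zero_mem hb hx⟩ h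
  obtain ⟨y, hy, hyx, hyb, rfl⟩ := hr
  exact ⟨y, hy, hyx, hyb, hr0⟩

lemma aux_f0_ge {L : X →ₗ[ℝ] ℝ} (hpos : IsPositive L) {b x y : X}
    (hy : 0 ≤ y) (hyx : y ≤ x) (hyb : y ⊓ b = 0) : L y ≤ aux_f0 L b x :=
  le_csSup (aux_set_bdd hpos b x) ⟨y, hy, hyx, hyb, rfl⟩

lemma aux_f0_add {L : X →ₗ[ℝ] ℝ} (hpos : IsPositive L) {b : X} (hb : 0 ≤ b)
    {x₁ x₂ : X} (hx₁ : 0 ≤ x₁) (hx₂ : 0 ≤ x₂) :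
    aux_f0 L b (x₁ + x₂) = aux_f0 L b x₁ + aux_f0 L b x₂ := by
  refine le_antisymm ?_ ?_
  · refine csSup_le ⟨0, aux_set_zero_mem hb (add_nonneg hx₁ hx₂)⟩ ?_
    rintro r ⟨y, hy, hyx, hyb, rfl⟩
    obtain ⟨y₁, y₂, hy₁, hy₁x, hy₂, hy₂x, rfl⟩ := aux_riesz_decomp y x₁ x₂ hy hyx hx₁ hx₂
    have hb₁ : y₁ ⊓ b = 0 := le_antisymm (le_trans (inf_le_inf_right b
      (le_add_of_nonneg_right hy₂)) (le_of_eq hyb)) (le_inf hy₁ hb)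
    have hb₂ : y₂ ⊓ b = 0 := le_antisymm (le_trans (inf_le_inf_right b
      (le_add_of_nonneg_left hy₁)) (le_of_eq hyb)) (le_inf hy₂ hb)
    rw [map_add]
    exact add_le_add (aux_f0_ge hpos hy₁ hy₁x hb₁) (aux_f0_ge hpos hy₂ hy₂x hb₂)
  · -- superadditivity
    have key : ∀ r₁ ∈ aux_set L b x₁, ∀ r₂ ∈ aux_set L b x₂,
        r₁ + r₂ ≤ aux_f0 L b (x₁ + x₂) := by
      rintro r₁ ⟨y₁, hy₁, hy₁x, hb₁, rfl⟩ r₂ ⟨y₂, hy₂, hy₂x, hb₂, rfl⟩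
      have hyb : (y₁ + y₂) ⊓ b = 0 := by
        refine le_antisymm ?_ (le_inf (add_nonneg hy₁ hy₂) hb)
        calc (y₁ + y₂) ⊓ b ≤ y₁ ⊓ b + y₂ ⊓ b := aux_add_inf_le y₁ y₂ b hy₁ hy₂ hb
          _ = 0 := by rw [hb₁, hb₂, add_zero]
      have := aux_f0_ge hpos (add_nonneg hy₁ hy₂) (add_le_add hy₁x hy₂x) hyb
      rwa [map_add] at this
    have h1 : aux_f0 L b x₁ ≤ aux_f0 L b (x₁ + x₂) - aux_f0 L b x₂ := by
      refine csSup_le ⟨0, aux_set_zero_mem hb hx₁⟩ (fun r₁ hr₁ => ?_)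
      have h2 : aux_f0 L b x₂ ≤ aux_f0 L b (x₁ + x₂) - r₁ :=
        csSup_le ⟨0, aux_set_zero_mem hb hx₂⟩ (fun r₂ hr₂ => by
          have := key r₁ hr₁ r₂ hr₂; linarith)
      linarith
    linarith

lemma aux_f0_smul_le {L : X →ₗ[ℝ] ℝ} (hpos : IsPositive L) {b : X} (hb : 0 ≤ b)
    {c : ℝ} (hc : 0 < c) {x : X} (hx : 0 ≤ x) :
    aux_f0 L b (c • x) ≤ c * aux_f0 L b x := by
  refine csSup_le ⟨0, aux_set_zero_mem hb (smul_nonneg hc.le hx)⟩ ?_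
  rintro r ⟨y, hy, hyx, hyb, rfl⟩
  have hy' : 0 ≤ c⁻¹ • y := smul_nonneg (inv_nonneg.mpr hc.le) hy
  have hyx' : c⁻¹ • y ≤ x := by
    have := smul_le_smul_of_nonneg_left hyx (inv_nonneg.mpr hc.le)
    rwa [smul_smul, inv_mul_cancel₀ hc.ne', one_smul] at this
  have hyb' : (c⁻¹ • y) ⊓ b = 0 := by
    have h1 : (c⁻¹ • y) ⊓ ((1:ℝ) • b) = 0 :=
      aux_smul_disj _ _ _ _ (inv_pos.mpr hc) one_pos hy hb hyb
    rwa [one_smul] at h1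
  have h2 := aux_f0_ge hpos hy' hyx' hyb'
  rw [map_smul, smul_eq_mul] at h2
  calc L y = c * (c⁻¹ * L y) := by field_simp
    _ ≤ c * aux_f0 L b x := mul_le_mul_of_nonneg_left h2 hc.le

lemma aux_f0_smul {L : X →ₗ[ℝ] ℝ} (hpos : IsPositive L) {b : X} (hb : 0 ≤ b)
    {c : ℝ} (hc : 0 < c) {x : X} (hx : 0 ≤ x) :
    aux_f0 L b (c • x) = c * aux_f0 L b x := by
  refine le_antisymm (aux_f0_smul_le hpos hb hc hx) ?_
  have h1 := aux_f0_smul_le hpos hb (inv_pos.mpr hc) (smul_nonneg hc.le hx)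
  rw [smul_smul, inv_mul_cancel₀ hc.ne', one_smul] at h1
  have h2 := mul_le_mul_of_nonneg_left h1 hc.le
  rw [← mul_assoc, mul_inv_cancel₀ hc.ne', one_mul] at h2
  exact h2

/-- A positive functional with Grothendieck kernel is the sum of two Riesz homs. -/
lemma aux_PCC (L : X →ₗ[ℝ] ℝ) (hpos : IsPositive L)
    (hG : ∀ x y : X, L x = 0 → L y = 0 → L (x ⊔ y ⊔ 0) + L (x ⊓ y ⊓ 0) = 0) :
    ∃ f g : X →ₗ[ℝ] ℝ, IsRieszHom f ∧ IsRieszHom g ∧ ∀ x : X, L x = f x + g x := by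
  by_cases hab : ∃ a b : X, 0 ≤ a ∧ 0 ≤ b ∧ a ⊓ b = 0 ∧ 0 < L a ∧ 0 < L b
  swap
  · -- no two disjoint carriers: L itself is a Riesz hom
    push_neg at hab
    refine ⟨L, 0, aux_hom_char hpos (fun u v hu hv huv => ?_), fun x y => by simp, fun x => by simp⟩
    by_contra hcon
    push_neg at hcon
    have h1 : 0 < L u := lt_of_le_of_ne (hpos u hu) (Ne.symm hcon.1)
    have h2 : 0 < L v := lt_of_le_of_ne (hpos v hv) (Ne.symm hcon.2)
    linarith [hab u v hu hv huv h1]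
  obtain ⟨a, b, ha, hb, hab', hLa, hLb⟩ := hab
  -- C0 : elements disjoint from both a and b are null
  have C0 : ∀ w : X, 0 ≤ w → w ⊓ a = 0 → w ⊓ b = 0 → L w = 0 := by
    intro w hw hwa hwb
    by_contra hLw
    have hLw' : 0 < L w := lt_of_le_of_ne (hpos w hw) (Ne.symm hLw)
    exact aux_triple hpos hG ha hb hw hLa hLb hLw' hab'
      (by rw [inf_comm]; exact hwa) (by rw [inf_comm]; exact hwb)
  -- C1
  have C1 : ∀ x : X, 0 ≤ x → aux_f0 L b x + aux_f0 L a x ≤ L x := by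
    intro x hx
    have key : ∀ r₁ ∈ aux_set L b x, ∀ r₂ ∈ aux_set L a x, r₁ + r₂ ≤ L x := by
      rintro r₁ ⟨y, hy, hyx, hyb, rfl⟩ r₂ ⟨z, hz, hzx, hza, rfl⟩
      have hyz : L y + L z = L (y ⊓ z) + L (y ⊔ z) := by
        have h := inf_add_sup y z
        have := congrArg L h
        rw [map_add] at this
        rw [this, map_add]
      have hinfa : (y ⊓ z) ⊓ a = 0 := le_antisymm
        ((inf_le_inf_right a inf_le_right).trans (le_of_eq hza))
        (le_inf (le_inf hy hz) ha)
      have hinfb : (y ⊓ z) ⊓ b = 0 := le_antisymm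
        ((inf_le_inf_right b inf_le_left).trans (le_of_eq hyb))
        (le_inf (le_inf hy hz) hb)
      have h0 : L (y ⊓ z) = 0 := C0 _ (le_inf hy hz) hinfa hinfb
      have hsup : L (y ⊔ z) ≤ L x := aux_mono hpos (sup_le hyx hzx)
      linarith
    have h1 : aux_f0 L b x ≤ L x - aux_f0 L a x := by
      refine csSup_le ⟨0, aux_set_zero_mem hb hx⟩ (fun r₁ hr₁ => ?_)
      have h2 : aux_f0 L a x ≤ L x - r₁ :=
        csSup_le ⟨0, aux_set_zero_mem ha hx⟩ (fun r₂ hr₂ => by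
          have := key r₁ hr₁ r₂ hr₂; linarith)
      linarith
    linarith
  -- C2
  have C2 : ∀ x : X, 0 ≤ x → L x ≤ aux_f0 L b x + aux_f0 L a x := by
    intro x hx
    by_contra hcon
    push_neg at hcon
    set ε : ℝ := (L x - (aux_f0 L b x + aux_f0 L a x)) with hε
    have hε0 : 0 < ε := by rw [hε]; linarith
    obtain ⟨n, hn1, hres⟩ := aux_resid hpos hG ha hb hab' hLa hLb hx hε0
    have hnpos : (0:ℝ) < (n:ℝ) := by exact_mod_cast hn1
    set y : X := x ⊓ ((n:ℝ) • a) with hy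
    set z : X := x ⊓ ((n:ℝ) • b) with hz
    have hy0 : 0 ≤ y := le_inf hx (smul_nonneg hnpos.le ha)
    have hz0 : 0 ≤ z := le_inf hx (smul_nonneg hnpos.le hb)
    have hyb : y ⊓ b = 0 := by
      have h1 : ((n:ℝ) • a) ⊓ ((1:ℝ) • b) = 0 :=
        aux_smul_disj _ _ _ _ hnpos one_pos ha hb hab'
      rw [one_smul] at h1
      exact le_antisymm ((inf_le_inf_right b inf_le_right).trans (le_of_eq h1))
        (le_inf hy0 hb)
    have hza : z ⊓ a = 0 := by
      have h1 : ((n:ℝ) • b) ⊓ ((1:ℝ) • a) = 0 :=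
        aux_smul_disj _ _ _ _ hnpos one_pos hb ha (by rw [inf_comm]; exact hab')
      rw [one_smul] at h1
      exact le_antisymm ((inf_le_inf_right a inf_le_right).trans (le_of_eq h1))
        (le_inf hz0 ha)
    have hyz : y ⊓ z = 0 := by
      have h1 : ((n:ℝ) • a) ⊓ ((n:ℝ) • b) = 0 :=
        aux_smul_disj _ _ _ _ hnpos hnpos ha hb hab'
      exact le_antisymm ((inf_le_inf inf_le_right inf_le_right).trans (le_of_eq h1))
        (le_inf hy0 hz0)
    have hsum : y + z = x ⊓ ((n:ℝ) • (a + b)) := by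
      have h1 : y + z = y ⊔ z := by
        have h2 := inf_add_sup y z
        rw [hyz, zero_add] at h2
        exact h2.symm
      have h2 : ((n:ℝ) • a) ⊔ ((n:ℝ) • b) = (n:ℝ) • a + (n:ℝ) • b := by
        have h3 := inf_add_sup ((n:ℝ) • a) ((n:ℝ) • b)
        rw [aux_smul_disj _ _ _ _ hnpos hnpos ha hb hab', zero_add] at h3
        exact h3
      rw [h1, hy, hz, ← inf_sup_left, h2, ← smul_add]
    have hLy : L y ≤ aux_f0 L b x := aux_f0_ge hpos hy0 inf_le_left hyb
    have hLz : L z ≤ aux_f0 L a x := aux_f0_ge hpos hz0 inf_le_left hza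
    have hsplit : L x = L y + L z + L (x - x ⊓ ((n:ℝ) • (a + b))) := by
      rw [map_sub, ← hsum, map_add]
      ring
    linarith
  have feq : ∀ x : X, 0 ≤ x → aux_f0 L b x + aux_f0 L a x = L x :=
    fun x hx => le_antisymm (C1 x hx) (C2 x hx)
  -- build linear map from aux_f0 L b
  set F : X → ℝ := fun x => aux_f0 L b (x ⊔ 0) - aux_f0 L b ((-x) ⊔ 0) with hF
  have Fcone : ∀ x : X, 0 ≤ x → F x = aux_f0 L b x := by
    intro x hx
    rw [hF]
    simp only []
    rw [sup_eq_left.mpr hx, sup_eq_right.mpr (neg_nonpos.mpr hx), aux_f0_zero hpos hb,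
      sub_zero]
  have Fdiff : ∀ (u v z : X), 0 ≤ u → 0 ≤ v → z = u - v → F z = aux_f0 L b u - aux_f0 L b v := by
    intro u v z hu hv hzuv
    have h3 : (z ⊔ 0) - ((-z) ⊔ 0) = u - v := by rw [aux_posPart_sub z, hzuv]
    rw [sub_eq_sub_iff_add_eq_add] at h3
    have h4 := congrArg (aux_f0 L b) h3
    rw [aux_f0_add hpos hb le_sup_right hv, aux_f0_add hpos hb hu le_sup_right] at h4
    rw [hF]
    simp only []
    linarith
  have Fadd : ∀ x y : X, F (x + y) = F x + F y := by
    intro x y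
    have h1 : x + y = (x ⊔ 0 + y ⊔ 0) - ((-x) ⊔ 0 + (-y) ⊔ 0) := by
      have h2 : (x ⊔ 0 + y ⊔ 0) - ((-x) ⊔ 0 + (-y) ⊔ 0)
          = (x ⊔ 0 - (-x) ⊔ 0) + (y ⊔ 0 - (-y) ⊔ 0) := by abel
      rw [h2, aux_posPart_sub, aux_posPart_sub]
    rw [Fdiff _ _ _ (add_nonneg le_sup_right le_sup_right)
      (add_nonneg le_sup_right le_sup_right) h1,
      aux_f0_add hpos hb le_sup_right le_sup_right,
      aux_f0_add hpos hb le_sup_right le_sup_right]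
    rw [hF]; simp only []; ring
  have Fneg : ∀ x : X, F (-x) = - F x := by
    intro x
    rw [hF]; simp only [neg_neg]; ring
  have Fsmul : ∀ (c : ℝ) (x : X), F (c • x) = c * F x := by
    intro c x
    rcases lt_trichotomy c 0 with hc | hc | hc
    · have hc' : 0 < -c := by linarith
      have h1 : c • x = (-c) • (-x) := by rw [neg_smul_neg]
      rw [h1]
      have h2 : ((-c) • (-x)) ⊔ 0 = (-c) • ((-x) ⊔ 0) := by
        rw [aux_smul_sup _ hc', smul_zero]
      have h3 : (-((-c) • (-x))) ⊔ 0 = (-c) • (x ⊔ 0) := by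
        rw [← smul_neg, neg_neg, aux_smul_sup _ hc', smul_zero]
      rw [hF]
      simp only []
      rw [h2, h3, aux_f0_smul hpos hb hc' le_sup_right, aux_f0_smul hpos hb hc' le_sup_right]
      ring
    · rw [hc, zero_smul, zero_mul, hF]
      simp only [neg_zero, sup_idem]
      rw [aux_f0_zero hpos hb]
      ring
    · have h2 : (c • x) ⊔ 0 = c • (x ⊔ 0) := by
        rw [aux_smul_sup _ hc, smul_zero]
      have h3 : (-(c • x)) ⊔ 0 = c • ((-x) ⊔ 0) := by
        rw [← smul_neg, aux_smul_sup _ hc, smul_zero]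
      rw [hF]
      simp only []
      rw [h2, h3, aux_f0_smul hpos hb hc le_sup_right, aux_f0_smul hpos hb hc le_sup_right]
      ring
  set f : X →ₗ[ℝ] ℝ :=
    { toFun := F
      map_add' := Fadd
      map_smul' := fun c x => by
        simp only [RingHom.id_apply, smul_eq_mul]; exact Fsmul c x } with hfdef
  have hfapp : ∀ x : X, f x = F x := fun x => rfl
  set g : X →ₗ[ℝ] ℝ := L - f with hgdef
  have hgapp : ∀ x : X, g x = L x - F x := fun x => rfl
  have gcone : ∀ x : X, 0 ≤ x → g x = aux_f0 L a x := by
    intro x hx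
    rw [hgapp, Fcone x hx]
    have := feq x hx
    linarith
  have hf_pos : IsPositive f := fun x hx => by
    rw [hfapp, Fcone x hx]; exact aux_f0_nonneg hpos hb hx
  have hg_pos : IsPositive g := fun x hx => by
    rw [gcone x hx]; exact aux_f0_nonneg hpos ha hx
  refine ⟨f, g, ?_, ?_, fun x => by rw [hfapp, hgapp]; ring⟩
  · refine aux_hom_char hf_pos (fun u v hu hv huv => ?_)
    by_contra hcon
    push_neg at hcon
    have hfu : 0 < aux_f0 L b u := lt_of_le_of_ne (aux_f0_nonneg hpos hb hu)
      (fun h => hcon.1 (by rw [hfapp, Fcone u hu, ← h]))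
    have hfv : 0 < aux_f0 L b v := lt_of_le_of_ne (aux_f0_nonneg hpos hb hv)
      (fun h => hcon.2 (by rw [hfapp, Fcone v hv, ← h]))
    obtain ⟨y, hy, hyu, hyb, hLy⟩ := aux_f0_witness hpos hb hu hfu
    obtain ⟨z, hz, hzv, hzb, hLz⟩ := aux_f0_witness hpos hb hv hfv
    have hyz : y ⊓ z = 0 := le_antisymm
      ((inf_le_inf hyu hzv).trans (le_of_eq huv)) (le_inf hy hz)
    exact aux_triple hpos hG hy hz hb hLy hLz hLb hyz hyb hzb
  · refine aux_hom_char hg_pos (fun u v hu hv huv => ?_)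
    by_contra hcon
    push_neg at hcon
    have hfu : 0 < aux_f0 L a u := lt_of_le_of_ne (aux_f0_nonneg hpos ha hu)
      (fun h => hcon.1 (by rw [gcone u hu, ← h]))
    have hfv : 0 < aux_f0 L a v := lt_of_le_of_ne (aux_f0_nonneg hpos ha hv)
      (fun h => hcon.2 (by rw [gcone v hv, ← h]))
    obtain ⟨y, hy, hyu, hya, hLy⟩ := aux_f0_witness hpos ha hu hfu
    obtain ⟨z, hz, hzv, hza, hLz⟩ := aux_f0_witness hpos ha hv hfv
    have hyz : y ⊓ z = 0 := le_antisymm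
      ((inf_le_inf hyu hzv).trans (le_of_eq huv)) (le_inf hy hz)
    exact aux_triple hpos hG hy hz ha hLy hLz hLa hyz hya hza

lemma aux_smul_negone {L : X →ₗ[ℝ] ℝ} {w : X} (hw : L w < 0) :
    L ((-(L w))⁻¹ • w) = -1 := by
  rw [map_smul, smul_eq_mul]
  rw [inv_mul_eq_div, div_eq_iff (by linarith : -(L w) ≠ 0)]
  ring

/-- forward direction -/
lemma aux_forward {l p : X →ₗ[ℝ] ℝ} (hp : IsPosPartOf l p)
    (hG : IsGrothendieckSubspace (LinearMap.ker l)) :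
    ∃ f g : X →ₗ[ℝ] ℝ, IsRieszHom f ∧ IsRieszHom g ∧ p + (p - l) = f + g := by
  have hG' : ∀ x y : X, l x = 0 → l y = 0 → l (x ⊔ y ⊔ 0) + l (x ⊓ y ⊓ 0) = 0 :=
    fun x y hx hy => aux_G' hG hx hy
  by_cases hA : ∃ u : X, 0 ≤ u ∧ 0 < l u
  · by_cases hB : ∃ w : X, 0 ≤ w ∧ l w < 0
    · -- mixed case : p and p - l are Riesz homs
      obtain ⟨u₀, hu₀, hlu₀⟩ := hA
      obtain ⟨w₀, hw₀, hlw₀⟩ := hB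
      have hphom : IsRieszHom p := by
        refine aux_hom_char hp.1 (fun u v hu hv huv => ?_)
        by_contra hcon
        push_neg at hcon
        have hpu : 0 < p u := lt_of_le_of_ne (hp.1 u hu) (Ne.symm hcon.1)
        have hpv : 0 < p v := lt_of_le_of_ne (hp.1 v hv) (Ne.symm hcon.2)
        obtain ⟨u', hu', huu, hlu'⟩ := aux_p_pos_witness hp hu hpu
        obtain ⟨v', hv', hvv, hlv'⟩ := aux_p_pos_witness hp hv hpv
        have hdisj : u' ⊓ v' = 0 := le_antisymm
          ((inf_le_inf huu hvv).trans (le_of_eq huv)) (le_inf hu' hv')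
        have hkey := aux_coreB hG'
          (smul_nonneg (inv_nonneg.mpr hlu'.le) hu')
          (smul_nonneg (inv_nonneg.mpr hlv'.le) hv')
          (smul_nonneg (inv_nonneg.mpr (neg_nonneg.mpr hlw₀.le)) hw₀)
          (aux_smul_one hlu') (aux_smul_one hlv') (aux_smul_negone hlw₀)
        rw [aux_smul_disj _ _ _ _ (inv_pos.mpr hlu') (inv_pos.mpr hlv') hu' hv' hdisj,
          map_zero] at hkey
        linarith
      have hqhom : IsRieszHom (p - l) := by
        have hG'neg : ∀ x y : X, (-l) x = 0 → (-l) y = 0 →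
            (-l) (x ⊔ y ⊔ 0) + (-l) (x ⊓ y ⊓ 0) = 0 := by
          intro x y hx hy
          rw [LinearMap.neg_apply] at hx hy ⊢
          rw [LinearMap.neg_apply]
          have := hG' x y (by linarith) (by linarith)
          linarith
        refine aux_hom_char hp.2.1 (fun u v hu hv huv => ?_)
        by_contra hcon
        push_neg at hcon
        have hc1 : (p - l) u = p u - l u := LinearMap.sub_apply p l u
        have hc2 : (p - l) v = p v - l v := LinearMap.sub_apply p l v
        have hqu : 0 < p u - l u := by
          have h1 := hp.2.1 u hu
          rw [hc1] at h1
          rcases eq_or_lt_of_le h1 with h | h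
          · exact absurd (by rw [hc1, ← h]) hcon.1
          · exact h
        have hqv : 0 < p v - l v := by
          have h1 := hp.2.1 v hv
          rw [hc2] at h1
          rcases eq_or_lt_of_le h1 with h | h
          · exact absurd (by rw [hc2, ← h]) hcon.2
          · exact h
        obtain ⟨z₁, hz₁, hzu, hlz₁⟩ := aux_q_pos_witness hp hu (by linarith)
        obtain ⟨z₂, hz₂, hzv, hlz₂⟩ := aux_q_pos_witness hp hv (by linarith)
        have hdisj : z₁ ⊓ z₂ = 0 := le_antisymm
          ((inf_le_inf hzu hzv).trans (le_of_eq huv)) (le_inf hz₁ hz₂)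
        have hnl₁ : 0 < (-l) z₁ := by rw [LinearMap.neg_apply]; linarith
        have hnl₂ : 0 < (-l) z₂ := by rw [LinearMap.neg_apply]; linarith
        have hnlw : (-l) u₀ < 0 := by rw [LinearMap.neg_apply]; linarith
        have hkey := aux_coreB hG'neg
          (smul_nonneg (inv_nonneg.mpr hnl₁.le) hz₁)
          (smul_nonneg (inv_nonneg.mpr hnl₂.le) hz₂)
          (smul_nonneg (inv_nonneg.mpr (neg_nonneg.mpr hnlw.le)) hu₀)
          (aux_smul_one hnl₁) (aux_smul_one hnl₂) (aux_smul_negone hnlw)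
        rw [aux_smul_disj _ _ _ _ (inv_pos.mpr hnl₁) (inv_pos.mpr hnl₂) hz₁ hz₂ hdisj,
          map_zero] at hkey
        linarith
      exact ⟨p, p - l, hphom, hqhom, rfl⟩
    · -- l is positive
      push_neg at hB
      have hl : IsPositive l := fun u hu => hB u hu
      obtain ⟨f, g, hf, hg, hsum⟩ := aux_PCC l hl hG'
      refine ⟨f, g, hf, hg, ?_⟩
      ext x
      have hpx := aux_p_eq_l_of_pos hp hl x
      simp only [LinearMap.add_apply, LinearMap.sub_apply]
      rw [hpx, ← hsum x]
      ring
  · -- l is nonpositive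
    push_neg at hA
    have hl : ∀ u : X, 0 ≤ u → l u ≤ 0 := fun u hu => hA u hu
    have hnlpos : IsPositive (-l) := fun u hu => by
      rw [LinearMap.neg_apply]; linarith [hl u hu]
    have hG'neg : ∀ x y : X, (-l) x = 0 → (-l) y = 0 →
        (-l) (x ⊔ y ⊔ 0) + (-l) (x ⊓ y ⊓ 0) = 0 := by
      intro x y hx hy
      rw [LinearMap.neg_apply] at hx hy ⊢
      rw [LinearMap.neg_apply]
      have := hG' x y (by linarith) (by linarith)
      linarith
    obtain ⟨f, g, hf, hg, hsum⟩ := aux_PCC (-l) hnlpos hG'neg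
    refine ⟨f, g, hf, hg, ?_⟩
    ext x
    have hpx := aux_p_eq_zero_of_nonpos hp hl x
    have hsx := hsum x
    rw [LinearMap.neg_apply] at hsx
    simp only [LinearMap.add_apply, LinearMap.sub_apply]
    rw [hpx, ← hsx]
    ring

lemma aux_real_negsup (A B : ℝ) : ((-A) ⊔ (-B) ⊔ 0) = -(A ⊓ B ⊓ 0) := by
  rw [neg_inf, neg_inf, neg_zero]

lemma aux_real_neginf (A B : ℝ) : ((-A) ⊓ (-B) ⊓ 0) = -(A ⊔ B ⊔ 0) := by
  rw [neg_sup, neg_sup, neg_zero]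

lemma aux_hom_negPart {f : X →ₗ[ℝ] ℝ} (hf : IsRieszHom f) (x : X) :
    f ((-x) ⊔ 0) = (- f x) ⊔ 0 := by
  have := aux_hom_posPart hf (-x)
  rwa [map_neg] at this

/-- kernel of both homs is contained in kernel of l -/
lemma aux_ker_fg {l p f g : X →ₗ[ℝ] ℝ} (hp : IsPosPartOf l p)
    (hf : IsRieszHom f) (hg : IsRieszHom g) (heq : p + (p - l) = f + g) :
    ∀ z : X, f z = 0 → g z = 0 → l z = 0 := by
  have hm : ∀ x : X, 2 * p x - l x = f x + g x := by
    intro x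
    have := LinearMap.congr_fun heq x
    simp only [LinearMap.add_apply, LinearMap.sub_apply] at this
    linarith
  intro z hfz hgz
  have hcone : ∀ w : X, 0 ≤ w → f w = 0 → g w = 0 → l w = 0 := by
    intro w hw hfw hgw
    have h1 := hm w
    have h2 := hp.1 w hw
    have h3 := hp.2.1 w hw
    rw [LinearMap.sub_apply] at h3
    linarith
  have hzp : l (z ⊔ 0) = 0 := by
    refine hcone _ le_sup_right ?_ ?_
    · rw [aux_hom_posPart hf, hfz]; simp
    · rw [aux_hom_posPart hg, hgz]; simp
  have hzn : l ((-z) ⊔ 0) = 0 := by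
    refine hcone _ le_sup_right ?_ ?_
    · rw [aux_hom_negPart hf, hfz]; simp
    · rw [aux_hom_negPart hg, hgz]; simp
  have := aux_posPart_sub z
  calc l z = l ((z ⊔ 0) - ((-z) ⊔ 0)) := by rw [this]
    _ = 0 := by rw [map_sub, hzp, hzn, sub_zero]

/-- backward direction, degenerate case: ker g ⊆ ker f -/
lemma aux_backward_prop {l p f g : X →ₗ[ℝ] ℝ} (hp : IsPosPartOf l p)
    (hf : IsRieszHom f) (hg : IsRieszHom g) (heq : p + (p - l) = f + g)
    (hker : ∀ z : X, g z = 0 → f z = 0) :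
    IsGrothendieckSubspace (LinearMap.ker l) := by
  have hg_pos := aux_hom_pos hg
  have hm : ∀ x : X, 2 * p x - l x = f x + g x := by
    intro x
    have := LinearMap.congr_fun heq x
    simp only [LinearMap.add_apply, LinearMap.sub_apply] at this
    linarith
  by_cases hgz : ∃ x₀ : X, g x₀ ≠ 0
  · obtain ⟨x₀, hx₀⟩ := hgz
    have he₀ : ∃ e₀ : X, 0 ≤ e₀ ∧ 0 < g e₀ := by
      have hsplit : g (x₀ ⊔ 0) - g ((-x₀) ⊔ 0) = g x₀ := by
        rw [← map_sub, aux_posPart_sub]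
      rcases lt_trichotomy (g x₀) 0 with h | h | h
      · exact ⟨(-x₀) ⊔ 0, le_sup_right, by
          have := hg_pos _ (le_sup_right : (0:X) ≤ x₀ ⊔ 0); linarith⟩
      · exact absurd h hx₀
      · exact ⟨x₀ ⊔ 0, le_sup_right, by
          have := hg_pos _ (le_sup_right : (0:X) ≤ (-x₀) ⊔ 0); linarith⟩
    obtain ⟨e₀, he₀', hge₀⟩ := he₀
    set e : X := (g e₀)⁻¹ • e₀ with he
    have hge : g e = 1 := aux_smul_one hge₀
    have hdecomp : ∀ x : X, l x = g x * l e := by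
      intro x
      have hz : g (x - g x • e) = 0 := by
        rw [map_sub, map_smul, smul_eq_mul, hge]; ring
      have hl := aux_ker_fg hp hf hg heq _ (hker _ hz) hz
      rw [map_sub, map_smul, smul_eq_mul] at hl
      linarith
    intro x hx y hy
    rw [LinearMap.mem_ker] at hx hy ⊢
    rw [hdecomp x] at hx
    rw [hdecomp y] at hy
    rw [map_add, hdecomp (x ⊔ y ⊔ 0), hdecomp (x ⊓ y ⊓ 0)]
    by_cases hγ : l e = 0
    · rw [hγ]; ring
    · have hgx : g x = 0 := by
        rcases mul_eq_zero.mp hx with h | h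
        · exact h
        · exact absurd h hγ
      have hgy : g y = 0 := by
        rcases mul_eq_zero.mp hy with h | h
        · exact h
        · exact absurd h hγ
      rw [hg, hg, aux_hom_inf hg, aux_hom_inf hg, hgx, hgy, map_zero]
      simp
  · push_neg at hgz
    have hfz : ∀ x : X, f x = 0 := fun x => hker x (hgz x)
    have hl0 : ∀ w : X, 0 ≤ w → l w = 0 := by
      intro w hw
      have h1 := hm w
      have h2 := hp.1 w hw
      have h3 := hp.2.1 w hw
      rw [LinearMap.sub_apply] at h3
      rw [hfz w, hgz w] at h1
      linarith
    have hlz : ∀ x : X, l x = 0 := by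
      intro x
      have h4 := aux_posPart_sub x
      calc l x = l ((x ⊔ 0) - ((-x) ⊔ 0)) := by rw [h4]
        _ = 0 := by rw [map_sub, hl0 _ le_sup_right, hl0 _ le_sup_right, sub_zero]
    intro x _ y _
    rw [LinearMap.mem_ker]
    exact hlz _

/-- backward direction -/
lemma aux_backward {l p : X →ₗ[ℝ] ℝ} (hp : IsPosPartOf l p)
    {f g : X →ₗ[ℝ] ℝ} (hf : IsRieszHom f) (hg : IsRieszHom g)
    (heq : p + (p - l) = f + g) :
    IsGrothendieckSubspace (LinearMap.ker l) := by
  have hf_pos := aux_hom_pos hf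
  have hg_pos := aux_hom_pos hg
  have hm : ∀ x : X, 2 * p x - l x = f x + g x := by
    intro x
    have := LinearMap.congr_fun heq x
    simp only [LinearMap.add_apply, LinearMap.sub_apply] at this
    linarith
  by_cases hPfg : ∃ u : X, 0 ≤ u ∧ 0 < f u ∧ g u = 0
  · by_cases hPgf : ∃ v : X, 0 ≤ v ∧ 0 < g v ∧ f v = 0
    · -- main case
      obtain ⟨u₀, hu₀, hfu₀, hgu₀⟩ := hPfg
      obtain ⟨v₀, hv₀, hgv₀, hfv₀⟩ := hPgf
      obtain ⟨u, hu, hfu, hgu⟩ : ∃ u : X, 0 ≤ u ∧ f u = 1 ∧ g u = 0 :=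
        ⟨(f u₀)⁻¹ • u₀, smul_nonneg (inv_nonneg.mpr hfu₀.le) hu₀, aux_smul_one hfu₀,
          by rw [map_smul, smul_eq_mul, hgu₀, mul_zero]⟩
      obtain ⟨v, hv, hgv, hfv⟩ : ∃ v : X, 0 ≤ v ∧ g v = 1 ∧ f v = 0 :=
        ⟨(g v₀)⁻¹ • v₀, smul_nonneg (inv_nonneg.mpr hgv₀.le) hv₀, aux_smul_one hgv₀,
          by rw [map_smul, smul_eq_mul, hfv₀, mul_zero]⟩
      obtain ⟨γ, hγ'⟩ : ∃ γ : ℝ, γ = l u := ⟨l u, rfl⟩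
      obtain ⟨δ, hδ'⟩ : ∃ δ : ℝ, δ = l v := ⟨l v, rfl⟩
      have hdecomp : ∀ x : X, l x = f x * γ + g x * δ := by
        intro x
        have hz1 : f (x - f x • u - g x • v) = 0 := by
          rw [map_sub, map_sub, map_smul, map_smul, smul_eq_mul, smul_eq_mul,
            hfu, hfv]
          ring
        have hz2 : g (x - f x • u - g x • v) = 0 := by
          rw [map_sub, map_sub, map_smul, map_smul, smul_eq_mul, smul_eq_mul,
            hgu, hgv]
          ring
        have hl := aux_ker_fg hp hf hg heq _ hz1 hz2
        rw [map_sub, map_sub, map_smul, map_smul, smul_eq_mul, smul_eq_mul] at hl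
        rw [hγ', hδ']
        linarith
      -- p u = max γ 0
      have hpmax : ∀ (w : X), 0 ≤ w → f w + g w = 1 →
          (∀ y : X, 0 ≤ y → y ≤ w → l y = (f y + g y) * l w) → p w = max (l w) 0 := by
        intro w hw hw1 hyval
        rw [hp.2.2 w hw]
        refine le_antisymm (csSup_le ⟨0, aux_S_zero_mem hp hw⟩ ?_)
          (le_csSup (aux_S_bdd hp w) ?_)
        · rintro r ⟨y, hy, hyw, rfl⟩
          rw [hyval y hy hyw]
          have h1 : 0 ≤ f y + g y := add_nonneg (hf_pos y hy) (hg_pos y hy)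
          have h2 : f y + g y ≤ 1 := by
            have hfm := aux_mono hf_pos hyw
            have hgm := aux_mono hg_pos hyw
            linarith
          rcases le_or_gt 0 (l w) with h | h
          · calc (f y + g y) * l w ≤ 1 * l w := mul_le_mul_of_nonneg_right h2 h
              _ = l w := one_mul _
              _ ≤ max (l w) 0 := le_max_left _ _
          · calc (f y + g y) * l w ≤ 0 := mul_nonpos_of_nonneg_of_nonpos h1 h.le
              _ ≤ max (l w) 0 := le_max_right _ _
        · rcases le_or_gt 0 (l w) with h | h
          · rw [max_eq_left h]
            exact ⟨w, hw, le_refl w, rfl⟩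
          · rw [max_eq_right h.le]
            exact aux_S_zero_mem hp hw
      have hγval : γ = 1 ∨ γ = -1 := by
        have hpu : p u = max γ 0 := by
          rw [hγ']
          refine hpmax u hu (by rw [hfu, hgu]; ring) (fun y hy hyw => ?_)
          have hgy : g y = 0 :=
            le_antisymm (by have := aux_mono hg_pos hyw; rwa [hgu] at this) (hg_pos y hy)
          rw [hdecomp y, hgy, hγ']
          ring
        have h1 := hm u
        rw [hpu, hfu, hgu, ← hγ'] at h1
        rcases le_or_gt 0 γ with h | h
        · left; rw [max_eq_left h] at h1; linarith
        · right; rw [max_eq_right h.le] at h1; linarith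
      have hδval : δ = 1 ∨ δ = -1 := by
        have hpv : p v = max δ 0 := by
          rw [hδ']
          refine hpmax v hv (by rw [hfv, hgv]; ring) (fun y hy hyw => ?_)
          have hfy : f y = 0 :=
            le_antisymm (by have := aux_mono hf_pos hyw; rwa [hfv] at this) (hf_pos y hy)
          rw [hdecomp y, hfy, hδ']
          ring
        have h1 := hm v
        rw [hpv, hfv, hgv, ← hδ'] at h1
        rcases le_or_gt 0 δ with h | h
        · left; rw [max_eq_left h] at h1; linarith
        · right; rw [max_eq_right h.le] at h1; linarith
      -- now the Grothendieck property
      intro x hx y hy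
      rw [LinearMap.mem_ker] at hx hy ⊢
      rw [map_add, hdecomp (x ⊔ y ⊔ 0), hdecomp (x ⊓ y ⊓ 0),
        hf, hf, aux_hom_inf hf, aux_hom_inf hf, hg, hg, aux_hom_inf hg, aux_hom_inf hg,
        map_zero]
      simp only [map_zero]
      rw [hdecomp x] at hx
      rw [hdecomp y] at hy
      set A : ℝ := f x
      set B : ℝ := f y
      set C : ℝ := g x
      set D : ℝ := g y
      rcases hγval with rfl | rfl <;> rcases hδval with h2 | h2 <;> rw [h2] at hx hy ⊢ <;>
        [(have hC : C = -A := by linarith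
          have hD : D = -B := by linarith
          rw [hC, hD, aux_real_negsup A B, aux_real_neginf A B]; ring);
         (have hC : C = A := by linarith
          have hD : D = B := by linarith
          rw [hC, hD]; ring);
         (have hC : C = A := by linarith
          have hD : D = B := by linarith
          rw [hC, hD]; ring);
         (have hC : C = -A := by linarith
          have hD : D = -B := by linarith
          rw [hC, hD, aux_real_negsup A B, aux_real_neginf A B]; ring)]
    · -- ker f ⊆ ker g
      push_neg at hPgf
      have hker : ∀ z : X, f z = 0 → g z = 0 := by
        intro z hfz
        have hp1 : f (z ⊔ 0) = 0 := by rw [aux_hom_posPart hf, hfz]; simp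
        have hp2 : f ((-z) ⊔ 0) = 0 := by rw [aux_hom_negPart hf, hfz]; simp
        have hq1 : g (z ⊔ 0) = 0 := by
          by_contra h
          have hgz : 0 < g (z ⊔ 0) := lt_of_le_of_ne (hg_pos _ le_sup_right) (Ne.symm h)
          exact (hPgf (z ⊔ 0) le_sup_right hgz) hp1
        have hq2 : g ((-z) ⊔ 0) = 0 := by
          by_contra h
          have hgz : 0 < g ((-z) ⊔ 0) := lt_of_le_of_ne (hg_pos _ le_sup_right) (Ne.symm h)
          exact (hPgf ((-z) ⊔ 0) le_sup_right hgz) hp2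
        have h4 := aux_posPart_sub z
        calc g z = g ((z ⊔ 0) - ((-z) ⊔ 0)) := by rw [h4]
          _ = 0 := by rw [map_sub, hq1, hq2, sub_zero]
      have heq' : p + (p - l) = g + f := by rw [heq, add_comm]
      exact aux_backward_prop hp hg hf heq' hker
  · -- ker g ⊆ ker f
    push_neg at hPfg
    have hker : ∀ z : X, g z = 0 → f z = 0 := by
      intro z hgz
      have hp1 : g (z ⊔ 0) = 0 := by rw [aux_hom_posPart hg, hgz]; simp
      have hp2 : g ((-z) ⊔ 0) = 0 := by rw [aux_hom_negPart hg, hgz]; simp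
      have hq1 : f (z ⊔ 0) = 0 := by
        by_contra h
        have hfz : 0 < f (z ⊔ 0) := lt_of_le_of_ne (hf_pos _ le_sup_right) (Ne.symm h)
        exact (hPfg (z ⊔ 0) le_sup_right hfz) hp1
      have hq2 : f ((-z) ⊔ 0) = 0 := by
        by_contra h
        have hfz : 0 < f ((-z) ⊔ 0) := lt_of_le_of_ne (hf_pos _ le_sup_right) (Ne.symm h)
        exact (hPfg ((-z) ⊔ 0) le_sup_right hfz) hp2
      have h4 := aux_posPart_sub z
      calc f z = f ((z ⊔ 0) - ((-z) ⊔ 0)) := by rw [h4]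
        _ = 0 := by rw [map_sub, hq1, hq2, sub_zero]
    exact aux_backward_prop hp hf hg heq hker

theorem ker_grothendieck_iff_modulus_two_disjoint (l p : X →ₗ[ℝ] ℝ)
    (hp : IsPosPartOf l p) :
    IsGrothendieckSubspace (LinearMap.ker l) ↔
      ∃ f g : X →ₗ[ℝ] ℝ, IsRieszHom f ∧ IsRieszHom g ∧ p + (p - l) = f + g := by
  exact ⟨fun hG => aux_forward hp hG,
    fun ⟨f, g, hf, hg, heq⟩ => aux_backward hp hf hg heq⟩
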